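/- Let Y be a compact topological space with a Γ-action and A ⊆ Y a clopen subset with Γ·A = Y. Then the characteristic function χ_A is a full idempotent in the crossed product ring F(Y;R)⋊Γ, i.e. the two-sided ideal generated by χ_A is the whole ring. -/

import Mathlib

open Set

/-- A function `f : Y → R` is *cut-and-paste continuous* if the preimage of every
point is clopen. -/
def IsCutPaste (Y R : Type) [TopologicalSpace Y] (f : Y → R) : Prop :=
  ∀ r : R, IsClopen (f ⁻¹' {r})

lemma isCutPaste_comb {Y R : Type} [TopologicalSpace Y] {f g : Y → R}
    (hf : IsCutPaste Y R f) (hg : IsCutPaste Y R g) (h : R → R → R) :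
    IsCutPaste Y R (fun y => h (f y) (g y)) := by
  have key : ∀ s : Set R, IsOpen ((fun y => h (f y) (g y)) ⁻¹' s) := by
    intro s
    have e : (fun y => h (f y) (g y)) ⁻¹' s
        = ⋃ (p : R × R) (_ : h p.1 p.2 ∈ s), f ⁻¹' {p.1} ∩ g ⁻¹' {p.2} := by
      ext y
      simp only [Set.mem_preimage, Set.mem_iUnion, Set.mem_inter_iff, Set.mem_singleton_iff]
      constructor
      · intro hy; exact ⟨(f y, g y), hy, rfl, rfl⟩
      · rintro ⟨⟨a, b⟩, hs, ha, hb⟩; rw [ha, hb]; exact hs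
    rw [e]
    exact isOpen_iUnion fun p => isOpen_iUnion fun _ => ((hf p.1).2.inter (hg p.2).2)
  intro r
  refine ⟨?_, key {r}⟩
  rw [← isOpen_compl_iff, ← Set.preimage_compl]
  exact key {r}ᶜ

lemma isCutPaste_const {Y R : Type} [TopologicalSpace Y] (r : R) :
    IsCutPaste Y R (fun _ => r) := by
  intro s
  classical
  rw [Set.preimage_const]
  split_ifs
  exacts [isClopen_univ, isClopen_empty]

/-- The `R`-algebra of cut-and-paste continuous functions `Y → R`. -/
def cutPasteAlgebra (Y R : Type) [TopologicalSpace Y] [CommRing R] :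
    Subalgebra R (Y → R) where
  carrier := {f | IsCutPaste Y R f}
  mul_mem' := fun hf hg => isCutPaste_comb hf hg (· * ·)
  add_mem' := fun hf hg => isCutPaste_comb hf hg (· + ·)
  algebraMap_mem' := fun r => isCutPaste_const r


set_option synthInstance.maxHeartbeats 1000000

section Crossed

variable (Y R : Type) [TopologicalSpace Y] [CommRing R]
variable (Γ : Type) [Group Γ] [MulAction Γ Y] [ContinuousConstSMul Γ Y]

/-- The action of `Γ` on cut-and-paste functions: `(γ • f)(y) = f(γ⁻¹ y)`. -/
def gsmul (γ : Γ) (f : cutPasteAlgebra Y R) : cutPasteAlgebra Y R :=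
  ⟨fun y => (f : Y → R) (γ⁻¹ • y),
    fun r => ((f.2 : IsCutPaste Y R f) r).preimage (continuous_const_smul γ⁻¹)⟩

/-- The multiplication of the crossed product `F(Y;R) ⋊ Γ`, realized on the free
`F(Y;R)`-module `Γ →₀ F(Y;R)` with basis `Γ`:  `(f·γ)(g·γ') = (f·g^γ)·(γγ')`. -/
noncomputable def cmul (a b : Γ →₀ cutPasteAlgebra Y R) : Γ →₀ cutPasteAlgebra Y R :=
  a.sum fun γ f => b.sum fun γ' g => Finsupp.single (γ * γ') (f * gsmul Y R Γ γ g)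

/-- The unit `1·1` of the crossed product. -/
noncomputable def cone : Γ →₀ cutPasteAlgebra Y R := Finsupp.single 1 1

/-- The characteristic function of a clopen subset, as a cut-and-paste function. -/
noncomputable def chi (A : Set Y) (hA : IsClopen A) : cutPasteAlgebra Y R :=
  ⟨A.indicator (fun _ => (1 : R)), by
    intro r
    classical
    have e : A.indicator (fun _ => (1 : R)) ⁻¹' {r}
        = (if (1 : R) = r then A else ∅) ∪ (if (0 : R) = r then Aᶜ else ∅) := by
      ext y
      by_cases hy : y ∈ A <;> by_cases h1 : (1 : R) = r <;> by_cases h0 : (0 : R) = r <;>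
        simp [Set.indicator, hy, h1, h0]
    rw [e]
    refine IsClopen.union ?_ ?_ <;> split_ifs <;>
      simp [hA, hA.compl, isClopen_empty]⟩

end Crossed


section Aux

variable (Y R : Type) [TopologicalSpace Y] [CommRing R]
variable (Γ : Type) [Group Γ] [MulAction Γ Y] [ContinuousConstSMul Γ Y]

lemma cmul_single (γ γ' : Γ) (f g : cutPasteAlgebra Y R) :
    cmul Y R Γ (Finsupp.single γ f) (Finsupp.single γ' g)
      = Finsupp.single (γ * γ') (f * gsmul Y R Γ γ g) := by
  classical
  rw [cmul, Finsupp.sum_single_index, Finsupp.sum_single_index]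
  · have h0 : gsmul Y R Γ γ (0 : cutPasteAlgebra Y R) = 0 := by
      apply Subtype.ext; rfl
    simp [h0]
  · rw [Finsupp.sum_single_index] <;> simp

lemma gsmul_one_eq (f : cutPasteAlgebra Y R) : gsmul Y R Γ 1 f = f := by
  apply Subtype.ext
  funext y
  simp [gsmul]

lemma gsmul_gsmul_inv (γ : Γ) (f : cutPasteAlgebra Y R) :
    gsmul Y R Γ γ (gsmul Y R Γ γ⁻¹ f) = f := by
  apply Subtype.ext
  funext y
  simp [gsmul, smul_smul]

lemma chi_mul_chi (A : Set Y) (hA : IsClopen A) :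
    chi Y R A hA * chi Y R A hA = chi Y R A hA := by
  apply Subtype.ext
  funext y
  show A.indicator (fun _ => (1:R)) y * A.indicator (fun _ => (1:R)) y
      = A.indicator (fun _ => (1:R)) y
  by_cases hy : y ∈ A <;> simp [hy]

open Pointwise in
lemma gsmul_chi_mul (γ : Γ) (A B : Set Y) (hA : IsClopen A) (hB : IsClopen B)
    (hsub : B ⊆ γ • A) :
    gsmul Y R Γ γ (chi Y R A hA) * chi Y R B hB = chi Y R B hB := by
  apply Subtype.ext
  funext y
  show A.indicator (fun _ => (1:R)) (γ⁻¹ • y) * B.indicator (fun _ => (1:R)) y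
      = B.indicator (fun _ => (1:R)) y
  by_cases hy : y ∈ B
  · have hmem : γ⁻¹ • y ∈ A := by
      have := hsub hy
      rwa [Set.mem_smul_set_iff_inv_smul_mem] at this
    simp [hy, hmem]
  · simp [hy]

end Aux

open Pointwise Finsupp in
/-- if `Y` is a compact `Γ`-space and `A ⊆ Y` a clopen subset with
`Γ·A = Y`, then the characteristic function `χ_A` is a full idempotent in the crossed
product `F(Y;R) ⋊ Γ`: it is idempotent, and there are finitely many elements `xᵢ, yᵢ` of
the crossed product with `∑ i, xᵢ · χ_A · yᵢ = 1`. -/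
theorem chi_full_idempotent (Y R Γ : Type) [TopologicalSpace Y] [CompactSpace Y]
    [CommRing R] [Group Γ] [MulAction Γ Y] [ContinuousConstSMul Γ Y]
    (A : Set Y) (hA : IsClopen A) (horb : (⋃ γ : Γ, γ • A) = Set.univ) :
    cmul Y R Γ (Finsupp.single 1 (chi Y R A hA)) (Finsupp.single 1 (chi Y R A hA))
        = Finsupp.single 1 (chi Y R A hA) ∧
    ∃ (k : ℕ) (x y : Fin k → (Γ →₀ cutPasteAlgebra Y R)),
      ∑ i, cmul Y R Γ (cmul Y R Γ (x i) (Finsupp.single 1 (chi Y R A hA))) (y i)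
        = cone Y R Γ := by
  classical
  constructor
  · rw [cmul_single, mul_one, gsmul_one_eq, chi_mul_chi]
  · have hcov : (Set.univ : Set Y) ⊆ ⋃ γ : Γ, γ • A := by rw [horb]
    obtain ⟨t, ht⟩ := isCompact_univ.elim_finite_subcover (fun γ : Γ => γ • A)
      (fun γ => hA.2.smul γ) hcov
    set l := t.toList with hl
    set k := l.length with hk
    set g : Fin k → Γ := fun i => l.get i with hg
    set C : Fin k → Set Y := fun i => g i • A with hC
    have hCclopen : ∀ i, IsClopen (C i) := fun i => ⟨hA.1.smul _, hA.2.smul _⟩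
    have hcov' : ∀ y : Y, ∃ i : Fin k, y ∈ C i := by
      intro y
      have := ht (Set.mem_univ y)
      simp only [Set.mem_iUnion] at this
      obtain ⟨γ, hγt, hγ⟩ := this
      have hmem : γ ∈ l := by simpa [hl] using hγt
      obtain ⟨i, hi⟩ := List.get_of_mem hmem
      refine ⟨i, ?_⟩
      show y ∈ g i • A
      rw [show g i = γ from hi]
      exact hγ
    set B : Fin k → Set Y := fun i => C i \ ⋃ j : Fin k, ⋃ (_ : j < i), C j with hB
    have hBclopen : ∀ i, IsClopen (B i) := by
      intro i
      exact (hCclopen i).diff (isClopen_iUnion_of_finite fun j =>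
        isClopen_iUnion_of_finite fun _ => hCclopen j)
    have hBsub : ∀ i, B i ⊆ C i := fun i => Set.diff_subset
    have hpoint : ∀ y : Y, ∃ i₀ : Fin k, y ∈ B i₀ ∧ ∀ j : Fin k, j ≠ i₀ → y ∉ B j := by
      intro y
      obtain ⟨i, hi⟩ := hcov' y
      have hne : (Finset.univ.filter (fun i => y ∈ C i)).Nonempty :=
        ⟨i, by simp [hi]⟩
      set i₀ := (Finset.univ.filter (fun i => y ∈ C i)).min' hne with hi₀
      have hi₀mem : y ∈ C i₀ := by
        have := Finset.min'_mem _ hne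
        simpa using this
      have hmin : ∀ j : Fin k, y ∈ C j → i₀ ≤ j := by
        intro j hj
        exact Finset.min'_le _ _ (by simp [hj])
      refine ⟨i₀, ⟨hi₀mem, ?_⟩, ?_⟩
      · simp only [Set.mem_iUnion, not_exists]
        intro j hj hyj
        exact absurd (hmin j hyj) (not_le.mpr hj)
      · intro j hj hyB
        rcases lt_or_gt_of_ne hj with h | h
        · exact absurd (hmin j hyB.1) (not_le.mpr h)
        · exact hyB.2 (Set.mem_iUnion.mpr ⟨i₀, Set.mem_iUnion.mpr ⟨h, hi₀mem⟩⟩)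
    have hsum : ∑ i : Fin k, chi Y R (B i) (hBclopen i) = 1 := by
      apply Subtype.ext
      rw [AddSubmonoidClass.coe_finset_sum]
      funext y
      rw [Finset.sum_apply]
      obtain ⟨i₀, hy₀, hyne⟩ := hpoint y
      have key : ∑ i : Fin k, (B i).indicator (fun _ => (1:R)) y = 1 := by
        rw [Finset.sum_eq_single_of_mem i₀ (Finset.mem_univ _)]
        · simp [hy₀]
        · intro j _ hj
          simp [hyne j hj]
      exact key
    refine ⟨k, fun i => Finsupp.single (g i) 1,
      fun i => Finsupp.single (g i)⁻¹ (gsmul Y R Γ (g i)⁻¹ (chi Y R (B i) (hBclopen i))), ?_⟩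
    have hterm : ∀ i : Fin k,
        cmul Y R Γ (cmul Y R Γ (Finsupp.single (g i) 1)
          (Finsupp.single 1 (chi Y R A hA)))
          (Finsupp.single (g i)⁻¹ (gsmul Y R Γ (g i)⁻¹ (chi Y R (B i) (hBclopen i))))
        = Finsupp.single 1 (chi Y R (B i) (hBclopen i)) := by
      intro i
      rw [cmul_single, mul_one, one_mul, cmul_single, mul_inv_cancel, gsmul_gsmul_inv,
        gsmul_chi_mul]
      exact hBsub i
    have hmap : ∑ i : Fin k, Finsupp.single (1:Γ) (chi Y R (B i) (hBclopen i))
        = Finsupp.single (1:Γ) (∑ i : Fin k, chi Y R (B i) (hBclopen i)) :=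
      (map_sum (Finsupp.singleAddHom (1:Γ)) _ _).symm
    rw [Finset.sum_congr rfl fun i _ => hterm i, hmap, hsum, cone]
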